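/- Cauchy product form of Bailey's second identity, odd part: for ρ ∈ ℂ with ρ, 2−ρ not nonpositive integers and every nonnegative integer k, ∑_{m=0}^{2k+1} (−1)^m / ((ρ)_{2k+1−m} (2−ρ)_m (2k+1−m)! m!) = (2(1−ρ)/(ρ(2−ρ))) · (−1)^k / (4^k (3/2)_k (ρ/2+1)_k (2−ρ/2)_k k!). -/
import Mathlib

noncomputable def poch (a : ℂ) (n : ℕ) : ℂ := (ascPochhammer ℂ n).eval a

lemma poch_zero' (a : ℂ) : poch a 0 = 1 := by simp [poch]
lemma poch_one' (a : ℂ) : poch a 1 = a := by simp [poch]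
lemma poch_succ' (a : ℂ) (n : ℕ) : poch a (n + 1) = poch a n * (a + n) := by
  simp [poch, ascPochhammer_succ_right]
lemma poch_add_two' (a : ℂ) (n : ℕ) :
    poch a (n + 2) = poch a n * (a + n) * (a + n + 1) := by
  rw [show n + 2 = (n + 1) + 1 from rfl, poch_succ', poch_succ']; push_cast; ring
lemma three_halves_ne (j : ℕ) : (3 / 2 : ℂ) ≠ -(j : ℂ) := by
  intro h
  have h2 : ((3 + 2 * j : ℕ) : ℂ) = 0 := by push_cast; linear_combination 2 * h
  exact absurd (Nat.cast_eq_zero.mp h2) (by omega)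

lemma poch_ne_zero' {a : ℂ} (h : ∀ j : ℕ, a ≠ -(j : ℂ)) (n : ℕ) : poch a n ≠ 0 := by
  induction n with
  | zero => simp [poch_zero']
  | succ n ih =>
    rw [poch_succ']
    refine mul_ne_zero ih fun hc => h n ?_
    linear_combination hc

lemma frac3 {x1 d1 x2 d2 x3 d3 : ℂ} (h1 : d1 ≠ 0) (h2 : d2 ≠ 0) (h3 : d3 ≠ 0)
    (h : x1 * (d2 * d3) + x2 * (d1 * d3) + x3 * (d1 * d2) = 0) :
    x1 / d1 + (x2 / d2 + x3 / d3) = 0 := by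
  rw [div_add_div _ _ h2 h3, div_add_div _ _ h1 (mul_ne_zero h2 h3), div_eq_zero_iff]
  left
  linear_combination h

lemma frac_combine {x1 d1 x2 d2 y1 e1 y2 e2 : ℂ} (hd1 : d1 ≠ 0) (hd2 : d2 ≠ 0)
    (he1 : e1 ≠ 0) (he2 : e2 ≠ 0)
    (h : (x1 * d2 + x2 * d1) * (e1 * e2) = (y1 * e2 - y2 * e1) * (d1 * d2)) :
    x1 / d1 + x2 / d2 = y1 / e1 - y2 / e2 := by
  rw [div_add_div _ _ hd1 hd2, div_sub_div _ _ he1 he2,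
    div_eq_div_iff (mul_ne_zero hd1 hd2) (mul_ne_zero he1 he2)]
  linear_combination h

noncomputable def Wfun (ρ : ℂ) (k m : ℕ) : ℂ :=
  (-(m : ℂ) ^ 4 + (2 * ρ + 6 * (k : ℂ) + 6) * (m : ℂ) ^ 3
      - (ρ ^ 2 + (9 * (k : ℂ) + 10) * ρ + 10 * (k : ℂ) ^ 2 + 18 * (k : ℂ) + 7) * (m : ℂ) ^ 2
      + ((3 * (k : ℂ) + 4) * ρ ^ 2 + (10 * (k : ℂ) ^ 2 + 21 * (k : ℂ) + 10) * ρ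
          - 10 * (k : ℂ) ^ 2 - 24 * (k : ℂ) - 14) * (m : ℂ))
    * (-1) ^ m /
    (poch ρ (2 * k + 3 - m) * poch (2 - ρ) m * ((2 * k + 3 - m).factorial : ℂ)
      * (m.factorial : ℂ))

set_option maxHeartbeats 1600000 in
lemma step_term (ρ : ℂ) (hρ : ∀ j : ℕ, ρ ≠ -(j : ℂ)) (hρ' : ∀ j : ℕ, 2 - ρ ≠ -(j : ℂ))
    (k m : ℕ) (hm : m ≤ 2 * k + 1) :
    ((2 * (k : ℂ) + 3) * (ρ + 2 * (k : ℂ) + 2) * (4 - ρ + 2 * (k : ℂ)) * ((k : ℂ) + 1)) *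
        ((-1 : ℂ) ^ m /
          (poch ρ (2 * k + 3 - m) * poch (2 - ρ) m * ((2 * k + 3 - m).factorial : ℂ)
            * (m.factorial : ℂ)))
      + 2 * ((-1 : ℂ) ^ m /
          (poch ρ (2 * k + 1 - m) * poch (2 - ρ) m * ((2 * k + 1 - m).factorial : ℂ)
            * (m.factorial : ℂ)))
      = Wfun ρ k (m + 1) - Wfun ρ k m := by
  obtain ⟨a, ha⟩ : ∃ a, 2 * k + 1 = m + a := ⟨2 * k + 1 - m, by omega⟩
  have e1 : 2 * k + 3 - m = a + 2 := by omega
  have e2 : 2 * k + 3 - (m + 1) = a + 1 := by omega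
  have e3 : 2 * k + 1 - m = a := by omega
  simp only [Wfun, e1, e2, e3]
  rw [poch_add_two', poch_succ' ρ a, poch_succ' (2 - ρ) m,
    show (a + 2).factorial = (a + 2) * ((a + 1) * a.factorial) by
      rw [Nat.factorial_succ, Nat.factorial_succ],
    show (a + 1).factorial = (a + 1) * a.factorial from Nat.factorial_succ a,
    show (m + 1).factorial = (m + 1) * m.factorial from Nat.factorial_succ m,
    pow_succ]
  push_cast
  have hkc : (k : ℂ) = ((m : ℂ) + (a : ℂ) - 1) / 2 := by
    have h := congrArg (Nat.cast : ℕ → ℂ) ha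
    push_cast at h
    linear_combination h / 2
  have hP : poch ρ a ≠ 0 := poch_ne_zero' hρ a
  have hQ : poch (2 - ρ) m ≠ 0 := poch_ne_zero' hρ' m
  have hA : (a.factorial : ℂ) ≠ 0 := Nat.cast_ne_zero.2 a.factorial_ne_zero
  have hM : (m.factorial : ℂ) ≠ 0 := Nat.cast_ne_zero.2 m.factorial_ne_zero
  have hA1 : ρ + (a : ℂ) ≠ 0 := fun h => hρ a (by linear_combination h)
  have hA2 : ρ + (a : ℂ) + 1 ≠ 0 := fun h => hρ (a + 1) (by push_cast; linear_combination h)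
  have hB1 : (a : ℂ) + 1 ≠ 0 := Nat.cast_add_one_ne_zero a
  have hB2 : (a : ℂ) + 2 ≠ 0 := by
    intro h
    have h2 : ((a + 2 : ℕ) : ℂ) = 0 := by push_cast; linear_combination h
    exact absurd (Nat.cast_eq_zero.mp h2) (by omega)
  have hC : (2 : ℂ) - ρ + (m : ℂ) ≠ 0 := fun h => hρ' m (by linear_combination h)
  have hD : (m : ℂ) + 1 ≠ 0 := Nat.cast_add_one_ne_zero m
  rw [← mul_div_assoc, ← mul_div_assoc]
  refine frac_combine ?_ ?_ ?_ ?_ (by rw [hkc]; ring) <;>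
    (repeat' apply mul_ne_zero) <;> assumption

set_option maxHeartbeats 1600000 in
lemma boundary (ρ : ℂ) (hρ : ∀ j : ℕ, ρ ≠ -(j : ℂ)) (hρ' : ∀ j : ℕ, 2 - ρ ≠ -(j : ℂ))
    (k : ℕ) :
    Wfun ρ k (2 * k + 2)
      + (((2 * (k : ℂ) + 3) * (ρ + 2 * (k : ℂ) + 2) * (4 - ρ + 2 * (k : ℂ)) * ((k : ℂ) + 1)) *
          ((-1 : ℂ) ^ (2 * k + 2) /
            (poch ρ (2 * k + 3 - (2 * k + 2)) * poch (2 - ρ) (2 * k + 2) *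
              ((2 * k + 3 - (2 * k + 2)).factorial : ℂ) * (((2 * k + 2).factorial : ℕ) : ℂ)))
        + ((2 * (k : ℂ) + 3) * (ρ + 2 * (k : ℂ) + 2) * (4 - ρ + 2 * (k : ℂ)) * ((k : ℂ) + 1)) *
          ((-1 : ℂ) ^ (2 * k + 2 + 1) /
            (poch ρ (2 * k + 3 - (2 * k + 2 + 1)) * poch (2 - ρ) (2 * k + 2 + 1) *
              ((2 * k + 3 - (2 * k + 2 + 1)).factorial : ℂ) * (((2 * k + 2 + 1).factorial : ℕ) : ℂ))))
      = 0 := by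
  have hQ : poch (2 - ρ) (2 * k + 2) ≠ 0 := poch_ne_zero' hρ' _
  have hE : (((2 * k + 2).factorial : ℕ) : ℂ) ≠ 0 := Nat.cast_ne_zero.2 (Nat.factorial_ne_zero _)
  have hρ0 : ρ ≠ 0 := fun h => hρ 0 (by simpa using h)
  have hC2 : (2 : ℂ) - ρ + (2 * (k : ℂ) + 2) ≠ 0 := fun h => hρ' (2 * k + 2) (by push_cast; linear_combination h)
  have he1 : (-1 : ℂ) ^ (2 * k + 2) = 1 := Even.neg_one_pow ⟨k + 1, by ring⟩
  have he2 : (-1 : ℂ) ^ (2 * k + 2 + 1) = -1 := Odd.neg_one_pow ⟨k + 1, by ring⟩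
  rw [show poch (2 - ρ) (2 * k + 2 + 1) = poch (2 - ρ) (2 * k + 2) * (2 - ρ + ((2 * k + 2 : ℕ) : ℂ)) from
      poch_succ' _ _,
    show (2 * k + 2 + 1).factorial = (2 * k + 2 + 1) * (2 * k + 2).factorial from Nat.factorial_succ _]
  simp only [Wfun, show 2 * k + 3 - (2 * k + 2) = 1 by omega,
    show 2 * k + 3 - (2 * k + 2 + 1) = 0 by omega, he1, he2, poch_one', poch_zero',
    Nat.factorial_one, Nat.factorial_zero]
  push_cast
  have hK : (2 * (k : ℂ) + 2 + 1) ≠ 0 := by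
    intro h
    have h2 : ((2 * k + 3 : ℕ) : ℂ) = 0 := by push_cast; linear_combination h
    exact absurd (Nat.cast_eq_zero.mp h2) (by omega)
  rw [← mul_div_assoc, ← mul_div_assoc]
  refine frac3 ?_ ?_ ?_ (by ring)
  all_goals (repeat' apply mul_ne_zero) <;>
    first
      | assumption
      | exact one_ne_zero

set_option maxHeartbeats 4000000 in
theorem stmt17 (ρ : ℂ) (hρ : ∀ k : ℕ, ρ ≠ -(k : ℂ)) (hρ' : ∀ k : ℕ, 2 - ρ ≠ -(k : ℂ))
    (h3 : ∀ k : ℕ, ρ / 2 + 1 ≠ -(k : ℂ)) (h4 : ∀ k : ℕ, 2 - ρ / 2 ≠ -(k : ℂ))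
    (k : ℕ) :
    ∑ m ∈ Finset.range (2 * k + 2),
        (-1 : ℂ) ^ m /
          (poch ρ (2 * k + 1 - m) * poch (2 - ρ) m *
            (2 * k + 1 - m).factorial * m.factorial)
      = (2 * (1 - ρ) / (ρ * (2 - ρ))) * ((-1 : ℂ) ^ k /
          ((4 : ℂ) ^ k * poch (3 / 2) k * poch (ρ / 2 + 1) k * poch (2 - ρ / 2) k *
            k.factorial)) := by
  have hρ0 : ρ ≠ 0 := fun h => hρ 0 (by simpa using h)
  have hρ2 : (2 : ℂ) - ρ ≠ 0 := fun h => hρ' 0 (by simpa using h)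
  induction k with
  | zero =>
    norm_num [Finset.sum_range_succ, poch_one', poch_zero']
    field_simp
    ring
  | succ k ih =>
    set D : ℂ := (2 * (k : ℂ) + 3) * (ρ + 2 * (k : ℂ) + 2) * (4 - ρ + 2 * (k : ℂ)) * ((k : ℂ) + 1) with hDdef
    have hD : D ≠ 0 := by
      refine mul_ne_zero (mul_ne_zero (mul_ne_zero ?_ ?_) ?_) ?_
      · intro h
        have h2 : ((2 * k + 3 : ℕ) : ℂ) = 0 := by push_cast; linear_combination h
        exact absurd (Nat.cast_eq_zero.mp h2) (by omega)
      · exact fun h => hρ (2 * k + 2) (by push_cast; linear_combination h)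
      · exact fun h => hρ' (2 * k + 2) (by push_cast; linear_combination h)
      · exact Nat.cast_add_one_ne_zero k
    have hsplit :
        ∑ m ∈ Finset.range (2 * (k + 1) + 2),
            (-1 : ℂ) ^ m /
              (poch ρ (2 * (k + 1) + 1 - m) * poch (2 - ρ) m *
                ((2 * (k + 1) + 1 - m).factorial : ℂ) * (m.factorial : ℂ))
          = ∑ m ∈ Finset.range (2 * k + 2),
              (-1 : ℂ) ^ m /
                (poch ρ (2 * k + 3 - m) * poch (2 - ρ) m *
                  ((2 * k + 3 - m).factorial : ℂ) * (m.factorial : ℂ))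
            + (-1 : ℂ) ^ (2 * k + 2) /
                (poch ρ (2 * k + 3 - (2 * k + 2)) * poch (2 - ρ) (2 * k + 2) *
                  ((2 * k + 3 - (2 * k + 2)).factorial : ℂ) * (((2 * k + 2).factorial : ℕ) : ℂ))
            + (-1 : ℂ) ^ (2 * k + 2 + 1) /
                (poch ρ (2 * k + 3 - (2 * k + 2 + 1)) * poch (2 - ρ) (2 * k + 2 + 1) *
                  ((2 * k + 3 - (2 * k + 2 + 1)).factorial : ℂ) * (((2 * k + 2 + 1).factorial : ℕ) : ℂ)) := by
      simp only [show 2 * (k + 1) + 1 = 2 * k + 3 by omega, show 2 * (k + 1) + 2 = (2 * k + 2 + 1) + 1 by omega,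
        Finset.sum_range_succ]
    have key :
        D * (∑ m ∈ Finset.range (2 * (k + 1) + 2),
            (-1 : ℂ) ^ m /
              (poch ρ (2 * (k + 1) + 1 - m) * poch (2 - ρ) m *
                ((2 * (k + 1) + 1 - m).factorial : ℂ) * (m.factorial : ℂ)))
          + 2 * (∑ m ∈ Finset.range (2 * k + 2),
            (-1 : ℂ) ^ m /
              (poch ρ (2 * k + 1 - m) * poch (2 - ρ) m *
                ((2 * k + 1 - m).factorial : ℂ) * (m.factorial : ℂ))) = 0 := by
      rw [hsplit]
      have hsum :
          ∑ m ∈ Finset.range (2 * k + 2),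
              (D * ((-1 : ℂ) ^ m /
                (poch ρ (2 * k + 3 - m) * poch (2 - ρ) m *
                  ((2 * k + 3 - m).factorial : ℂ) * (m.factorial : ℂ)))
               + 2 * ((-1 : ℂ) ^ m /
                (poch ρ (2 * k + 1 - m) * poch (2 - ρ) m *
                  ((2 * k + 1 - m).factorial : ℂ) * (m.factorial : ℂ))))
            = Wfun ρ k (2 * k + 2) - Wfun ρ k 0 := by
        rw [← Finset.sum_range_sub (fun m => Wfun ρ k m) (2 * k + 2)]
        refine Finset.sum_congr rfl fun m hm => ?_
        exact step_term ρ hρ hρ' k m (by have := Finset.mem_range.mp hm; omega)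
      have hW0 : Wfun ρ k 0 = 0 := by
        simp [Wfun]
      have hb := boundary ρ hρ hρ' k
      have expand :
          ∑ m ∈ Finset.range (2 * k + 2),
              (D * ((-1 : ℂ) ^ m /
                (poch ρ (2 * k + 3 - m) * poch (2 - ρ) m *
                  ((2 * k + 3 - m).factorial : ℂ) * (m.factorial : ℂ)))
               + 2 * ((-1 : ℂ) ^ m /
                (poch ρ (2 * k + 1 - m) * poch (2 - ρ) m *
                  ((2 * k + 1 - m).factorial : ℂ) * (m.factorial : ℂ))))
            = D * (∑ m ∈ Finset.range (2 * k + 2),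
                (-1 : ℂ) ^ m /
                  (poch ρ (2 * k + 3 - m) * poch (2 - ρ) m *
                    ((2 * k + 3 - m).factorial : ℂ) * (m.factorial : ℂ)))
              + 2 * (∑ m ∈ Finset.range (2 * k + 2),
                (-1 : ℂ) ^ m /
                  (poch ρ (2 * k + 1 - m) * poch (2 - ρ) m *
                    ((2 * k + 1 - m).factorial : ℂ) * (m.factorial : ℂ))) := by
        rw [Finset.sum_add_distrib, ← Finset.mul_sum, ← Finset.mul_sum]
      linear_combination hsum - expand + hb - hW0
    rw [ih] at key
    rw [show (2 * (1 - ρ) / (ρ * (2 - ρ))) * ((-1 : ℂ) ^ (k + 1) /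
          ((4 : ℂ) ^ (k + 1) * poch (3 / 2) (k + 1) * poch (ρ / 2 + 1) (k + 1) *
            poch (2 - ρ / 2) (k + 1) * ((k + 1).factorial : ℂ)))
        = (-2 * ((2 * (1 - ρ) / (ρ * (2 - ρ))) * ((-1 : ℂ) ^ k /
          ((4 : ℂ) ^ k * poch (3 / 2) k * poch (ρ / 2 + 1) k * poch (2 - ρ / 2) k *
            (k.factorial : ℂ))))) / D from ?_]
    · rw [eq_div_iff hD]
      linear_combination key
    · have hP1 : poch (3 / 2) k ≠ 0 := poch_ne_zero' three_halves_ne k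
      have hP2 : poch (ρ / 2 + 1) k ≠ 0 := poch_ne_zero' h3 k
      have hP3 : poch (2 - ρ / 2) k ≠ 0 := poch_ne_zero' h4 k
      have hF : ((k.factorial : ℕ) : ℂ) ≠ 0 := Nat.cast_ne_zero.2 (Nat.factorial_ne_zero _)
      have h4k : ((4 : ℂ)) ^ k ≠ 0 := pow_ne_zero _ (by norm_num)
      have f1 : (3 : ℂ) / 2 + (k : ℂ) ≠ 0 := fun h => three_halves_ne k (by linear_combination h)
      have f2 : ρ / 2 + 1 + (k : ℂ) ≠ 0 := fun h => h3 k (by linear_combination h)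
      have f3 : (2 : ℂ) - ρ / 2 + (k : ℂ) ≠ 0 := fun h => h4 k (by linear_combination h)
      have f4 : ((k : ℂ) + 1) ≠ 0 := Nat.cast_add_one_ne_zero k
      have d1 : (2 * (k : ℂ) + 3) ≠ 0 := by
        intro h
        have h2 : ((2 * k + 3 : ℕ) : ℂ) = 0 := by push_cast; linear_combination h
        exact absurd (Nat.cast_eq_zero.mp h2) (by omega)
      have d2 : (ρ + 2 * (k : ℂ) + 2) ≠ 0 := fun h => hρ (2 * k + 2) (by push_cast; linear_combination h)
      have d3 : (4 - ρ + 2 * (k : ℂ)) ≠ 0 := fun h => hρ' (2 * k + 2) (by push_cast; linear_combination h)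
      have hB1 : ρ * (2 - ρ) * ((4 : ℂ) ^ (k + 1) * poch (3 / 2) (k + 1) * poch (ρ / 2 + 1) (k + 1) *
          poch (2 - ρ / 2) (k + 1) * (((k + 1).factorial : ℕ) : ℂ)) ≠ 0 := by
        refine mul_ne_zero (mul_ne_zero hρ0 hρ2) ?_
        exact mul_ne_zero (mul_ne_zero (mul_ne_zero (mul_ne_zero (pow_ne_zero _ (by norm_num))
          (poch_ne_zero' three_halves_ne _)) (poch_ne_zero' h3 _)) (poch_ne_zero' h4 _))
          (Nat.cast_ne_zero.2 (Nat.factorial_ne_zero _))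
      have hB0 : ρ * (2 - ρ) * ((4 : ℂ) ^ k * poch (3 / 2) k * poch (ρ / 2 + 1) k *
          poch (2 - ρ / 2) k * ((k.factorial : ℕ) : ℂ)) ≠ 0 := by
        refine mul_ne_zero (mul_ne_zero hρ0 hρ2) ?_
        exact mul_ne_zero (mul_ne_zero (mul_ne_zero (mul_ne_zero h4k hP1) hP2) hP3) hF
      simp only [div_mul_div_comm]
      rw [eq_div_iff hD, div_mul_eq_mul_div, ← mul_div_assoc, div_eq_div_iff hB1 hB0]
      simp only [poch_succ', pow_succ, Nat.factorial_succ]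
      push_cast
      ring
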